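/- arXiv:2504.13268 — 2 statements merged into one kernel-verified Lean document; each statement's English description precedes it below -/
import Mathlib

section
/- Let F be a biconnected graph (or relational structure with biconnected Gaifman graph) on f vertices, and let S be a relational structure with one relation R of arity f whose girth exceeds f. Let G be the graph on the vertex set of S obtained by imposing a copy of F (via i ↦ x_i) on every tuple (x₁,…,x_f) ∈ R(S). Then every subgraph of G isomorphic to F is contained in the copy of F imposed by a single tuple of R(S). -/
/-- The structure with a single `f`-ary relation `R` has a cycle of length `t`. -/
def HasCycleOfLength {α : Type} {f : ℕ} (R : Set (Fin f → α)) (t : ℕ) : Prop :=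
  (t = 1 ∧ ∃ r ∈ R, ¬ Function.Injective r) ∨
  (2 ≤ t ∧ ∃ s : ℕ, s + 2 = t ∧
    ∃ (x : Fin (s + 2) → α) (rr : Fin (s + 2) → (Fin f → α)),
      Function.Injective x ∧ Function.Injective rr ∧ (∀ m, rr m ∈ R) ∧
      ∀ m : Fin (s + 2), (∃ j, rr m j = x m) ∧ (∃ j, rr (m + 1) j = x m))

/-- `F` is biconnected: connected, at least 3 vertices, no cutvertex. -/
def Biconnected {V : Type} [Fintype V] (F : SimpleGraph V) : Prop :=
  F.Connected ∧ 3 ≤ Fintype.card V ∧ ∀ v : V, (F.induce {u | u ≠ v}).Connected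

def CWalk {α : Type} {f : ℕ} (R : Set (Fin f → α)) (s : ℕ) (x : Fin (s+2) → α)
    (rr : Fin (s+2) → Fin f → α) : Prop :=
  Function.Injective x ∧ (∀ m, rr m ∈ R) ∧
  (∀ m, ∃ j, rr m j = x m) ∧ (∀ m, ∃ j, rr (m + 1) j = x m)

lemma cwalk_rotate {α : Type} {f : ℕ} {R : Set (Fin f → α)} {s : ℕ}
    {x : Fin (s+2) → α} {rr : Fin (s+2) → Fin f → α}
    (h : CWalk R s x rr) (c : Fin (s+2)) :
    CWalk R s (fun m => x (m + c)) (fun m => rr (m + c)) := by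
  obtain ⟨hx, hm, h1, h2⟩ := h
  refine ⟨fun a b hab => ?_, fun m => hm _, fun m => h1 _, fun m => ?_⟩
  · exact add_right_cancel (hx hab)
  · have := h2 (m + c)
    simpa [add_right_comm] using this

lemma surg_adj {α : Type} {f : ℕ} {R : Set (Fin f → α)} (s' : ℕ)
    (x : Fin (s'+3) → α) (rr : Fin (s'+3) → Fin f → α)
    (hw : CWalk R (s'+1) x rr) (hlast : rr (Fin.last (s'+2)) = rr 0)
    (hk : ∃ k, rr k ≠ rr (k+1)) :
    ∃ (x2 : Fin (s'+2) → α) (rr2 : Fin (s'+2) → Fin f → α),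
      CWalk R s' x2 rr2 ∧ ∃ k, rr2 k ≠ rr2 (k+1) := by
  obtain ⟨hx, hmem, h1, h2⟩ := hw
  have hcast1 : ∀ m : Fin (s'+2), m ≠ Fin.last (s'+1) →
      (m+1).castSucc = m.castSucc + 1 := by
    intro m hm
    have h1' : m < Fin.last (s'+1) := Fin.lt_last_iff_ne_last.mpr hm
    have h2' : m.castSucc < Fin.last (s'+2) := by
      rw [Fin.lt_def] at h1' ⊢
      simpa using h1'
    apply Fin.ext
    rw [Fin.coe_castSucc, Fin.val_add_one_of_lt h1', Fin.val_add_one_of_lt h2']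
    simp
  have hcastlast : (Fin.last (s'+1)).castSucc + 1 = Fin.last (s'+2) := by
    have h2' : (Fin.last (s'+1)).castSucc < Fin.last (s'+2) := by
      rw [Fin.lt_def]; simp
    apply Fin.ext
    rw [Fin.val_add_one_of_lt h2']
    simp
  refine ⟨fun m => x m.castSucc, fun m => rr m.castSucc,
    ⟨fun u v huv => Fin.castSucc_injective _ (hx huv),
     fun m => hmem _, fun m => h1 _, fun m => ?_⟩, ?_⟩
  · beta_reduce
    by_cases hm : m = Fin.last (s'+1)
    · subst hm
      rw [Fin.last_add_one, Fin.castSucc_zero, ← hlast, ← hcastlast]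
      exact h2 _
    · rw [hcast1 m hm]
      exact h2 _
  · obtain ⟨k, hk⟩ := hk
    have hkne : k ≠ Fin.last (s'+2) := by
      intro h
      subst h
      rw [Fin.last_add_one] at hk
      exact hk hlast
    have hklt : k.val < s' + 2 := by
      have := k.isLt
      rcases Nat.lt_or_ge k.val (s'+2) with h | h
      · exact h
      · exact absurd (Fin.ext (by simp; omega)) hkne
    refine ⟨⟨k.val, hklt⟩, ?_⟩
    beta_reduce
    have hck : (⟨k.val, hklt⟩ : Fin (s'+2)).castSucc = k := by apply Fin.ext; simp
    by_cases hm : (⟨k.val, hklt⟩ : Fin (s'+2)) = Fin.last (s'+1)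
    · rw [hck, hm, Fin.last_add_one, Fin.castSucc_zero, ← hlast]
      have : Fin.last (s'+2) = k + 1 := by
        rw [← hck, hm, hcastlast]
      rw [this]
      exact hk
    · rw [hcast1 _ hm, hck]
      exact hk

lemma surg_cut {α : Type} {f : ℕ} {R : Set (Fin f → α)} (s' bv : ℕ) (hbv : 2 ≤ bv)
    (x : Fin (s'+bv+2) → α) (rr : Fin (s'+bv+2) → Fin f → α)
    (hw : CWalk R (s'+bv) x rr) (hc : ∀ m, rr m ≠ rr (m+1))
    (hdup : rr 0 = rr ⟨bv, by omega⟩) :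
    ∃ (x2 : Fin (s'+2) → α) (rr2 : Fin (s'+2) → Fin f → α),
      CWalk R s' x2 rr2 ∧ ∃ k, rr2 k ≠ rr2 (k+1) := by
  obtain ⟨hx, hmem, h1, h2⟩ := hw
  set ι : Fin (s'+2) → Fin (s'+bv+2) := fun m => ⟨bv + m.val, by omega⟩ with hι
  have hιval : ∀ m, (ι m).val = bv + m.val := fun m => rfl
  have hι_inj : Function.Injective ι := by
    intro u v huv
    apply Fin.ext
    have h' : (ι u).val = (ι v).val := by rw [huv]
    rw [hιval, hιval] at h'
    omega
  have hι_add : ∀ m : Fin (s'+2), m ≠ Fin.last (s'+1) → ι (m + 1) = ι m + 1 := by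
    intro m hm
    have h1' : m < Fin.last (s'+1) := Fin.lt_last_iff_ne_last.mpr hm
    have h2' : ι m < Fin.last (s'+bv+1) := by
      rw [Fin.lt_def] at h1' ⊢
      rw [hιval]
      simp at h1' ⊢
      omega
    apply Fin.ext
    rw [Fin.val_add_one_of_lt h2', hιval, hιval, Fin.val_add_one_of_lt h1']
    omega
  have hι_last : ι (Fin.last (s'+1)) = Fin.last (s'+bv+1) := by
    apply Fin.ext; rw [hιval]; simp; omega
  refine ⟨fun m => x (ι m),
    fun m => if m.val = 0 then rr 0 else rr (ι m),
    ⟨fun u v huv => hι_inj (hx huv), fun m => ?_, fun m => ?_, fun m => ?_⟩, ?_⟩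
  · beta_reduce
    split <;> exact hmem _
  · beta_reduce
    by_cases h : m.val = 0
    · rw [if_pos h]
      have hι0 : ι m = ⟨bv, by omega⟩ := by
        apply Fin.ext; rw [hιval, h]; simp
      rw [hdup, ← hι0]
      exact h1 _
    · rw [if_neg h]
      exact h1 _
  · beta_reduce
    by_cases hm : m = Fin.last (s'+1)
    · subst hm
      rw [Fin.last_add_one]
      simp only [Fin.val_zero, if_pos rfl]
      have := h2 (Fin.last (s'+bv+1))
      rw [Fin.last_add_one] at this
      rwa [hι_last]
    · have hne0 : (m + 1).val ≠ 0 := by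
        have h1' : m < Fin.last (s'+1) := Fin.lt_last_iff_ne_last.mpr hm
        rw [Fin.val_add_one_of_lt h1']
        omega
      rw [if_neg hne0, hι_add m hm]
      exact h2 _
  · refine ⟨Fin.last (s'+1), ?_⟩
    beta_reduce
    rw [Fin.last_add_one]
    have hne0 : (Fin.last (s'+1)).val ≠ 0 := by simp
    rw [if_neg hne0]
    simp only [Fin.val_zero, if_pos]
    rw [hι_last]
    have := hc (Fin.last (s'+bv+1))
    rwa [Fin.last_add_one] at this

lemma extract {α : Type} {f : ℕ} {R : Set (Fin f → α)}
    (hgirth : ∀ t : ℕ, t ≤ f → ¬ HasCycleOfLength R t) :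
    ∀ s : ℕ, s + 2 ≤ f → ∀ (x : Fin (s+2) → α) (rr : Fin (s+2) → Fin f → α),
      CWalk R s x rr → (∃ k, rr k ≠ rr (k+1)) → False := by
  intro s
  induction s using Nat.strong_induction_on with
  | _ s ih =>
  intro hsf x rr hw hkk
  by_cases hrinj : Function.Injective rr
  · obtain ⟨hx, hmem, h1, h2⟩ := hw
    exact hgirth (s+2) hsf (Or.inr ⟨by omega, s, rfl, x, rr, hx, hrinj, hmem,
      fun m => ⟨h1 m, h2 m⟩⟩)
  obtain ⟨a, b, hab, hne⟩ := Function.not_injective_iff.mp hrinj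
  by_cases hcons : ∃ c : Fin (s+2), rr c = rr (c+1)
  · -- adjacent surgery
    obtain ⟨c, hc⟩ := hcons
    obtain ⟨k, hk⟩ := hkk
    rcases Nat.eq_zero_or_pos s with hs0 | hs1
    · subst hs0
      have h2' : rr (c+1) = rr (c+1+1) := by
        have : c + 1 + 1 = c := by
          apply Fin.ext; simp [Fin.add_def]; omega
        rw [this, hc]
      have hkc : k = c ∨ k = c + 1 := by
        rw [Fin.ext_iff, Fin.ext_iff]
        simp [Fin.add_def]
        omega
      rcases hkc with rfl | rfl
      · exact hk hc
      · exact hk h2'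
    obtain ⟨s', rfl⟩ : ∃ s', s' + 1 = s := ⟨s - 1, by omega⟩
    -- rotate by c + 1
    have hrot := cwalk_rotate (R := R) hw (c + 1)
    have hlast : (fun m => rr (m + (c + 1))) (Fin.last (s'+2)) =
        (fun m => rr (m + (c + 1))) 0 := by
      beta_reduce
      have e1 : Fin.last (s'+2) + (c + 1) = c := by
        have : Fin.last (s'+2) = -1 := eq_neg_of_add_eq_zero_left (Fin.last_add_one _)
        rw [this]; abel
      have e2 : (0 : Fin (s'+1+2)) + (c + 1) = c + 1 := zero_add _
      rw [e1, e2, hc]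
    have hk1 : ∃ k1, (fun m => rr (m + (c + 1))) k1 ≠
        (fun m => rr (m + (c + 1))) (k1 + 1) := by
      refine ⟨k - (c + 1), ?_⟩
      beta_reduce
      have e1 : k - (c + 1) + (c + 1) = k := by abel
      have e2 : k - (c + 1) + 1 + (c + 1) = k + 1 := by abel
      rw [e1, e2]
      exact hk
    obtain ⟨x2, rr2, hw2, hk2⟩ := surg_adj s' _ _ hrot hlast hk1
    exact ih s' (by omega) (by omega) x2 rr2 hw2 hk2
  · -- non-adjacent surgery
    push_neg at hcons
    -- rotate by a
    have hrot := cwalk_rotate (R := R) hw a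
    have hc1 : ∀ m, (fun m => rr (m + a)) m ≠ (fun m => rr (m + a)) (m + 1) := by
      intro m
      beta_reduce
      have e : m + 1 + a = m + a + 1 := by abel
      rw [e]
      exact hcons (m + a)
    have hdup0 : (fun m => rr (m + a)) 0 = (fun m => rr (m + a)) (b - a) := by
      beta_reduce
      have e1 : (0 : Fin (s+2)) + a = a := zero_add _
      have e2 : b - a + a = b := by abel
      rw [e1, e2, hab]
    set b1 : Fin (s+2) := b - a with hb1
    have hb1ne : b1 ≠ 0 := sub_ne_zero_of_ne (Ne.symm hne)
    have hbv1 : 1 ≤ b1.val := by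
      rcases Nat.eq_zero_or_pos b1.val with h | h
      · exact absurd (Fin.ext (by simp [h])) hb1ne
      · omega
    have hbv2 : 2 ≤ b1.val := by
      rcases Nat.lt_or_ge b1.val 2 with h | h
      · exfalso
        have hb1eq : b1 = 0 + 1 := by
          apply Fin.ext; simp [Fin.add_def]; omega
        exact hc1 0 (hdup0.trans (by rw [← hb1eq]))
      · exact h
    have hbvle : b1.val ≤ s := by
      rcases Nat.lt_or_ge b1.val (s+1) with h | h
      · omega
      · exfalso
        have hb1eq : b1 = Fin.last (s+1) := by
          apply Fin.ext; simp; omega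
        apply hc1 b1
        rw [hb1eq, Fin.last_add_one, ← hb1eq, ← hdup0]
    obtain ⟨bv, hbv⟩ : ∃ bv, b1.val = bv := ⟨_, rfl⟩
    rw [hbv] at hbv2 hbvle
    obtain ⟨s', hs'⟩ : ∃ s', s' + bv = s := ⟨s - bv, by omega⟩
    have hblt : s' < s := by omega
    subst hs'
    have hdup : (fun m => rr (m + a)) 0 =
        (fun m => rr (m + a)) ⟨bv, by omega⟩ := by
      have hbeq : b1 = ⟨bv, by omega⟩ := Fin.ext (by simp [hbv])
      rw [hdup0, hbeq]
    obtain ⟨x2, rr2, hw2, hk2⟩ := surg_cut s' bv hbv2 _ _ hrot hc1 hdup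
    exact ih s' hblt (by omega) x2 rr2 hw2 hk2


/-- Key combinatorial step in the second example of Section 3 of Kun–Nešetřil:
if `F` is biconnected on `f` vertices and `S` (one relation of arity `f`) has girth
exceeding `f`, then in the graph obtained by imposing a copy of `F` on every relational
tuple, every subgraph copy of `F` is contained in the copy imposed by a single tuple. -/
theorem stmt9 {f : ℕ} (F : SimpleGraph (Fin f)) (hF : Biconnected F)
    {α : Type} (R : Set (Fin f → α))
    (hgirth : ∀ t : ℕ, t ≤ f → ¬ HasCycleOfLength R t)
    (G : SimpleGraph α)
    (hG : ∀ u v : α, G.Adj u v ↔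
      (u ≠ v ∧ ∃ r ∈ R, ∃ i j : Fin f, F.Adj i j ∧ r i = u ∧ r j = v))
    (g : Fin f → α) (hg : Function.Injective g)
    (hcopy : ∀ i j : Fin f, F.Adj i j → G.Adj (g i) (g j)) :
    ∃ r ∈ R, Set.range g ⊆ Set.range r := by
  classical
  have hf3 : 3 ≤ f := by simpa using hF.2.1
  -- the tuple assigned to each edge
  obtain ⟨T, hT⟩ : ∃ T : Fin f → Fin f → (Fin f → α), ∀ i j, F.Adj i j →
      T i j ∈ R ∧ (∃ a, T i j a = g i) ∧ (∃ a, T i j a = g j) := by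
    refine ⟨fun i j =>
      if h : ∃ r, r ∈ R ∧ (∃ a, r a = g i) ∧ (∃ a, r a = g j) then h.choose
      else (fun _ => g i), fun i j hij => ?_⟩
    obtain ⟨hne, r, hr, a, b, hab, ha, hb⟩ := (hG (g i) (g j)).mp (hcopy i j hij)
    have hex : ∃ r, r ∈ R ∧ (∃ a, r a = g i) ∧ (∃ a, r a = g j) :=
      ⟨r, hr, ⟨a, ha⟩, ⟨b, hb⟩⟩
    beta_reduce
    rw [dif_pos hex]
    exact hex.choose_spec
  -- uniqueness of tuples through two points (no 2-cycles)
  have huniq : ∀ u v : α, u ≠ v → ∀ r ∈ R, ∀ r' ∈ R,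
      (∃ a, r a = u) → (∃ a, r a = v) → (∃ a, r' a = u) → (∃ a, r' a = v) →
      r = r' := by
    rintro u v huv r hr r' hr' ⟨a1, ha1⟩ ⟨a2, ha2⟩ ⟨a3, ha3⟩ ⟨a4, ha4⟩
    by_contra hne
    apply hgirth 2 (by omega)
    refine Or.inr ⟨le_refl 2, 0, rfl, ![u, v], ![r, r'], ?_, ?_, ?_, ?_⟩
    · intro a b hab
      fin_cases a <;> fin_cases b <;> simp_all
    · intro a b hab
      fin_cases a <;> fin_cases b <;> simp_all
    · intro m
      fin_cases m <;> simp [hr, hr']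
    · intro m
      fin_cases m
      · exact ⟨⟨a1, by simpa using ha1⟩, ⟨a3, by simpa using ha3⟩⟩
      · exact ⟨⟨a4, by simpa using ha4⟩, ⟨a2, by simpa using ha2⟩⟩
  have hTuniq : ∀ i j, F.Adj i j → ∀ r ∈ R, (∃ a, r a = g i) → (∃ a, r a = g j) →
      r = T i j := by
    intro i j hij r hr h1 h2
    obtain ⟨hTR, hTi, hTj⟩ := hT i j hij
    exact huniq (g i) (g j) (fun h => hij.ne (hg h)) r hr _ hTR h1 h2 hTi hTj
  have hTsymm : ∀ i j, F.Adj i j → T j i = T i j := by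
    intro i j hij
    obtain ⟨hR, h1, h2⟩ := hT j i hij.symm
    exact hTuniq i j hij _ hR h2 h1
  by_cases hP : ∀ i j k : Fin f, F.Adj i j → F.Adj i k → T i j = T i k
  · -- all edges carry the same tuple
    have nbr : ∀ v : Fin f, ∃ u, F.Adj v u := by
      intro v
      obtain ⟨w, hw⟩ := Fintype.exists_ne_of_one_lt_card (by simpa using by omega : 1 < Fintype.card (Fin f)) v
      obtain ⟨pw⟩ := hF.1.preconnected v w
      cases pw with
      | nil => exact absurd rfl hw
      | cons h _ => exact ⟨_, h⟩
    have v0 : Fin f := ⟨0, by omega⟩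
    obtain ⟨u0, h0⟩ := nbr ⟨0, by omega⟩
    have walkprop : ∀ v w : Fin f, F.Walk v w →
        (∀ u, F.Adj v u → T v u = T ⟨0, by omega⟩ u0) →
        ∀ u, F.Adj w u → T w u = T ⟨0, by omega⟩ u0 := by
      intro v w p
      induction p with
      | nil => exact fun h => h
      | @cons v' b w' h q ih =>
        intro hbase
        apply ih
        intro u hu
        calc T b u = T b v' := hP b u v' hu h.symm
        _ = T v' b := hTsymm v' b h
        _ = T ⟨0, by omega⟩ u0 := hbase b h
    refine ⟨T ⟨0, by omega⟩ u0, (hT _ _ h0).1, ?_⟩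
    rintro y ⟨idx, rfl⟩
    obtain ⟨u, hu⟩ := nbr idx
    obtain ⟨pw⟩ := hF.1.preconnected ⟨0, by omega⟩ idx
    have hTu := walkprop _ idx pw (fun u' hu' => hP _ u' u0 hu' h0) u hu
    obtain ⟨_, ⟨aidx, ha⟩, _⟩ := hT idx u hu
    exact ⟨aidx, by rw [← hTu]; exact ha⟩
  · -- two edges at a common vertex with different tuples: build a short cycle
    push_neg at hP
    obtain ⟨i, j, k, hij, hik, hTne⟩ := hP
    exfalso
    have hji : j ≠ i := hij.ne'
    have hki : k ≠ i := hik.ne'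
    have hjk : j ≠ k := by rintro rfl; exact hTne rfl
    have hjmem : j ∈ {u : Fin f | u ≠ i} := hji
    have hkmem : k ∈ {u : Fin f | u ≠ i} := hki
    obtain ⟨w0⟩ := (hF.2.2 i).preconnected ⟨j, hjmem⟩ ⟨k, hkmem⟩
    set p := w0.toPath with hp
    set l0 := p.1.support with hl0
    have hnd : l0.Nodup := p.2.support_nodup
    have hne0 : l0 ≠ [] := p.1.support_ne_nil
    obtain ⟨t0, hts⟩ : ∃ t, l0 = ⟨j, hjmem⟩ :: t := ⟨_, p.1.support_eq_cons⟩
    have hlast : l0.getLast hne0 = ⟨k, hkmem⟩ := p.1.getLast_support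
    have hpos : 0 < l0.length := List.length_pos_iff.mpr hne0
    have hlastget : l0.get ⟨l0.length - 1, by omega⟩ = ⟨k, hkmem⟩ := by
      rw [List.get_eq_getElem, ← List.getLast_eq_getElem]; exact hlast
    have hget0 : l0.get ⟨0, hpos⟩ = ⟨j, hjmem⟩ := by
      rw [List.get_mk_zero]; simp [hts]
    have hlen2 : 2 ≤ l0.length := by
      by_contra h
      have h1 : l0.length = 1 := by omega
      have heq : l0.get ⟨0, hpos⟩ = l0.get ⟨l0.length - 1, by omega⟩ := by
        congr 1; apply Fin.ext; simp [h1]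
      rw [hlastget, hget0] at heq
      exact hjk (congrArg Subtype.val heq)
    -- length bound: i :: (map val l0) is nodup in Fin f
    have hlenf : l0.length + 1 ≤ f := by
      have hndmap : (i :: l0.map Subtype.val).Nodup := by
        rw [List.nodup_cons]
        refine ⟨fun hmem => ?_, hnd.map Subtype.val_injective⟩
        obtain ⟨u, hu, hval⟩ := List.mem_map.mp hmem
        exact u.2 hval
      have := hndmap.length_le_card
      simpa using this
    obtain ⟨s0, hs0⟩ : ∃ s0, l0.length = s0 + 2 := ⟨l0.length - 2, by omega⟩
    have hbound : ∀ mv : ℕ, mv < s0 + 3 → mv - 1 < l0.length := by intro mv h; omega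
    set vert : Fin (s0 + 3) → Fin f :=
      fun m => if m.val = 0 then i else (l0.get ⟨m.val - 1, hbound _ m.isLt⟩).val
      with hvert
    have hvert_eval : ∀ m : Fin (s0+3), ∀ h : ¬ m.val = 0,
        vert m = (l0.get ⟨m.val - 1, hbound _ m.isLt⟩).val := by
      intro m h
      rw [hvert]
      beta_reduce
      rw [if_neg h]
    have hvert0 : vert 0 = i := by simp [hvert]
    have hvert1 : vert 1 = j := by
      have h1 : ((1 : Fin (s0+3))).val = 1 := rfl
      rw [hvert_eval 1 (by rw [h1]; omega)]
      have e : l0.get ⟨(1 : Fin (s0+3)).val - 1, hbound _ (Fin.isLt _)⟩ =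
          l0.get ⟨0, hpos⟩ := by
        congr 1
      rw [e, hget0]
    have hvertlast : vert (Fin.last (s0+2)) = k := by
      rw [hvert_eval _ (by simp)]
      have e : l0.get ⟨(Fin.last (s0+2)).val - 1, hbound _ (Fin.isLt _)⟩ =
          l0.get ⟨l0.length - 1, by omega⟩ := by
        congr 1; apply Fin.ext; simp [hs0]
      rw [e, hlastget]
    -- injectivity
    have hvinj : Function.Injective vert := by
      intro u v huv
      by_cases hu : u.val = 0 <;> by_cases hv : v.val = 0
      · apply Fin.ext; omega
      · exfalso
        rw [hvert] at huv
        beta_reduce at huv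
        rw [if_pos hu, if_neg hv] at huv
        exact (l0.get _).2 huv.symm
      · exfalso
        rw [hvert] at huv
        beta_reduce at huv
        rw [if_neg hu, if_pos hv] at huv
        exact (l0.get _).2 huv
      · rw [hvert_eval u hu, hvert_eval v hv] at huv
        have := List.nodup_iff_injective_get.mp hnd (Subtype.val_injective huv)
        have hval : u.val - 1 = v.val - 1 := by
          have := congrArg Fin.val this
          simpa using this
        apply Fin.ext; omega
    -- cyclic adjacency
    have hchain0 : List.Chain' F.Adj (l0.map Subtype.val) :=
      List.isChain_map_of_isChain (S := F.Adj) Subtype.val (fun a b hab => hab)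
        p.1.isChain_adj_support
    have hchain : ∀ mv : ℕ, (h : mv < l0.length - 1) →
        F.Adj (l0.get ⟨mv, by omega⟩).val (l0.get ⟨mv + 1, by omega⟩).val := by
      intro mv h
      have := List.isChain_iff_getElem.mp hchain0 mv (by simp; omega)
      simpa using this
    have hzs : (0 : Fin (s0+3)) - 1 = Fin.last (s0+2) := by
      rw [sub_eq_iff_eq_add]
      exact (Fin.last_add_one (s0+2)).symm
    have hsub1 : ∀ m : Fin (s0+3), m.val ≠ 0 → (m - 1).val = m.val - 1 := by
      intro m hm
      rw [Fin.coe_sub_one, if_neg (fun h => hm (by rw [h]; rfl))]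
    have hadjcyc : ∀ m : Fin (s0+3), F.Adj (vert (m - 1)) (vert m) := by
      intro m
      by_cases hm0 : m.val = 0
      · have hmz : m = 0 := Fin.ext hm0
        rw [hmz, hzs, hvert0, hvertlast]
        exact hik.symm
      · by_cases hm1 : m.val = 1
        · have hmo : m = 1 := Fin.ext hm1
          have : m - 1 = 0 := by rw [hmo]; abel
          rw [this, hvert0, hmo, hvert1]
          exact hij
        · have hmge : 2 ≤ m.val := by omega
          have hmne : (m - 1).val ≠ 0 := by rw [hsub1 m hm0]; omega
          rw [hvert_eval _ hmne, hvert_eval _ hm0]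
          have e1 : l0.get ⟨(m-1).val - 1, hbound _ (Fin.isLt _)⟩ =
              l0.get ⟨m.val - 2, by omega⟩ := by
            congr 1; apply Fin.ext; simp [hsub1 m hm0]; omega
          have e2 : l0.get ⟨m.val - 1, hbound _ (Fin.isLt _)⟩ =
              l0.get ⟨(m.val - 2) + 1, by omega⟩ := by
            congr 1; apply Fin.ext; simp; omega
          rw [e1, e2]
          exact hchain (m.val - 2) (by have := m.isLt; omega)
    -- the closed walk
    have hadd1 : ∀ m : Fin (s0+3), m + 1 - 1 = m := fun m => by abel
    refine extract hgirth (s0+1) (by omega)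
      (fun m => g (vert m)) (fun m => T (vert (m - 1)) (vert m))
      ⟨fun u v huv => hvinj (hg huv),
       fun m => (hT _ _ (hadjcyc m)).1,
       fun m => (hT _ _ (hadjcyc m)).2.2,
       fun m => ?_⟩ ⟨0, ?_⟩
    · beta_reduce
      rw [hadd1 m]
      have := (hT _ _ (hadjcyc (m+1))).2.1
      rwa [hadd1 m] at this
    · beta_reduce
      intro heq
      rw [hzs, hvertlast, hvert0] at heq
      rw [show (0 : Fin (s0+3)) + 1 = 1 from by abel] at heq
      rw [show (1 : Fin (s0+3)) - 1 = 0 from by abel] at heq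
      rw [hvert0, hvert1] at heq
      apply hTne
      rw [← heq, hTsymm i k hik]
end

section
/- Let C be a finite set of colors, G a finite graph, and K a fixed complete graph on at least 2 vertices that does not occur as a subgraph of G. Form G* as the disjoint union of G with |C|−1 disjoint copies of K. Then colorings c : V(G) → C are in bijection with linear orderings of V(G*) (up to the stated equivalence) in which each copy of K is an interval, the copies appear in a fixed order, and vertices of color i lie between the (i−1)-st and i-th copies; under this bijection, for any colored graph F′ on underlying graph F, the coloring c contains a copy of F′ if and only if the corresponding ordering of G* contains the corresponding ordered copy of F plus the |C|−1 copies of K with the induced ordering. -/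
/-- The disjoint union of `G` with `c - 1` disjoint copies of the complete graph `K_k`. -/
def starGraph {V : Type} (G : SimpleGraph V) (c k : ℕ) :
    SimpleGraph (V ⊕ Fin (c - 1) × Fin k) :=
  SimpleGraph.fromRel (fun a b =>
    match a, b with
    | Sum.inl u, Sum.inl v => G.Adj u v
    | Sum.inr p, Sum.inr q => p.1 = q.1 ∧ p.2 ≠ q.2
    | _, _ => False)

/-- An ordering of `G*` is good: injective, each copy of `K` is an interval, and the
copies appear in increasing order. -/
def GoodOrd {V : Type} (c k : ℕ) (ord : V ⊕ Fin (c - 1) × Fin k → ℚ) : Prop :=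
  Function.Injective ord ∧
  (∀ i : Fin (c - 1), ∀ y : V ⊕ Fin (c - 1) × Fin k,
    (∃ p q : Fin k, ord (Sum.inr (i, p)) < ord y ∧ ord y < ord (Sum.inr (i, q))) →
    ∃ p : Fin k, y = Sum.inr (i, p)) ∧
  (∀ i j : Fin (c - 1), i < j → ∀ p q : Fin k,
    ord (Sum.inr (i, p)) < ord (Sum.inr (j, q)))

/-- The coloring of `V` induced by an ordering of `G*`: the color of `v` is the number
of copies of `K` lying entirely below `v`. -/
def inducedCol {V : Type} (c k : ℕ) (ord : V ⊕ Fin (c - 1) × Fin k → ℚ) (v : V) : ℕ :=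
  (Finset.univ.filter fun i : Fin (c - 1) =>
    ∀ p : Fin k, ord (Sum.inr (i, p)) < ord (Sum.inl v)).card

/-- The strict order pattern of the ordered graph `F₊` associated to a coloring
`fcol` of `F`: copies of `K` in increasing order, the vertices of color `i` between the
`(i-1)`-st and `i`-th copies (vertices of equal color incomparable). -/
def patternLT {fn : ℕ} (c k : ℕ) (fcol : Fin fn → ℕ) :
    Fin fn ⊕ Fin (c - 1) × Fin k → Fin fn ⊕ Fin (c - 1) × Fin k → Prop
  | Sum.inl u, Sum.inl v => fcol u < fcol v
  | Sum.inl u, Sum.inr p => fcol u ≤ (p.1 : ℕ)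
  | Sum.inr p, Sum.inl u => (p.1 : ℕ) < fcol u
  | Sum.inr p, Sum.inr q => p.1 < q.1

section helpers

lemma downclosed_mem_iff {N : ℕ} (S : Finset (Fin N))
    (hdc : ∀ i j : Fin N, j ≤ i → i ∈ S → j ∈ S) (i : Fin N) :
    i ∈ S ↔ (i : ℕ) < S.card := by
  constructor
  · intro hi
    have hsub : Finset.Iic i ⊆ S := fun j hj => hdc i j (Finset.mem_Iic.mp hj) hi
    have := Finset.card_le_card hsub
    rw [Fin.card_Iic] at this
    omega
  · intro hi
    by_contra h
    have hsub : S ⊆ Finset.Iio i := fun j hj => Finset.mem_Iio.mpr (by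
      by_contra hj'
      exact h (hdc j i (le_of_not_gt hj') hj))
    have := Finset.card_le_card hsub
    rw [Fin.card_Iio] at this
    omega

lemma card_eq_of_mem_iff_lt {N m : ℕ} (hm : m ≤ N) (S : Finset (Fin N))
    (h : ∀ i : Fin N, i ∈ S ↔ (i : ℕ) < m) : S.card = m := by
  have h1 : S = (Finset.range m).attachFin
      (fun a ha => lt_of_lt_of_le (Finset.mem_range.mp ha) hm) := by
    ext i
    simp [Finset.mem_attachFin, h i]
  rw [h1, Finset.card_attachFin, Finset.card_range]

lemma strictMono_fin_id {n : ℕ} (f : Fin n → Fin n) (hf : StrictMono f) : ∀ i, f i = i := by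
  have hsurj : Function.Surjective f := Finite.surjective_of_injective hf.injective
  have := (hf.range_inj strictMono_id).mp
    (by rw [Set.range_eq_univ.mpr hsurj, Set.range_id])
  intro i; exact congrFun this i

section good
variable {V : Type} {c k : ℕ} {ord : V ⊕ Fin (c - 1) × Fin k → ℚ}

lemma inducedCol_le (v : V) : inducedCol c k ord v ≤ c - 1 := by
  have := Finset.card_filter_le (Finset.univ : Finset (Fin (c-1)))
    (fun i => ∀ p : Fin k, ord (Sum.inr (i, p)) < ord (Sum.inl v))
  simpa [inducedCol] using this

lemma good_below_iff (hord : GoodOrd c k ord) (hk : 0 < k) (v : V) (i : Fin (c - 1)) :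
    (∀ p : Fin k, ord (Sum.inr (i, p)) < ord (Sum.inl v)) ↔
      (i : ℕ) < inducedCol c k ord v := by
  have := downclosed_mem_iff
    (Finset.univ.filter fun i : Fin (c - 1) =>
      ∀ p : Fin k, ord (Sum.inr (i, p)) < ord (Sum.inl v))
    (by
      intro i j hji hi
      rw [Finset.mem_filter] at hi ⊢
      refine ⟨Finset.mem_univ _, ?_⟩
      intro p
      rcases eq_or_lt_of_le hji with h | h
      · rw [h]; exact hi.2 p
      · exact lt_trans (hord.2.2 j i h p ⟨0, hk⟩) (hi.2 ⟨0, hk⟩)) i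
  rw [Finset.mem_filter] at this
  unfold inducedCol
  constructor
  · intro h; exact this.mp ⟨Finset.mem_univ _, h⟩
  · intro h; exact (this.mpr h).2

lemma good_above (hord : GoodOrd c k ord) (hk : 0 < k) (v : V) (i : Fin (c - 1))
    (h : inducedCol c k ord v ≤ (i : ℕ)) :
    ∀ p : Fin k, ord (Sum.inl v) < ord (Sum.inr (i, p)) := by
  have hnot : ¬ ∀ p : Fin k, ord (Sum.inr (i, p)) < ord (Sum.inl v) := by
    rw [good_below_iff hord hk]; omega
  push_neg at hnot
  obtain ⟨p₀, hp₀⟩ := hnot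
  have h0 : ord (Sum.inl v) < ord (Sum.inr (i, p₀)) :=
    lt_of_le_of_ne hp₀ (fun he => by
      have := hord.1 he; simp at this)
  intro p
  by_contra hp
  have h1 : ord (Sum.inr (i, p)) < ord (Sum.inl v) :=
    lt_of_le_of_ne (not_lt.mp hp) (fun he => by
      have := hord.1 he; simp at this)
  obtain ⟨p', hp'⟩ := hord.2.1 i (Sum.inl v) ⟨p, p₀, h1, h0⟩
  simp at hp'

lemma good_vertex_lt (hord : GoodOrd c k ord) (hk : 0 < k) (u v : V)
    (h : inducedCol c k ord u < inducedCol c k ord v) :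
    ord (Sum.inl u) < ord (Sum.inl v) := by
  have hle : inducedCol c k ord v ≤ c - 1 := inducedCol_le v
  set i : Fin (c - 1) := ⟨inducedCol c k ord u, by omega⟩ with hi
  have h1 := good_above hord hk u i (le_refl _)
  have h2 := (good_below_iff hord hk v i).mpr h
  exact lt_trans (h1 ⟨0, hk⟩) (h2 ⟨0, hk⟩)

end good

lemma part1 {V : Type} [Fintype V] [DecidableEq V] (c k : ℕ) (hc : 1 ≤ c) (hk : 2 ≤ k)
    (col : V → ℕ) (hcol : ∀ v, col v < c) :
    ∃ ord : V ⊕ Fin (c - 1) × Fin k → ℚ, GoodOrd c k ord ∧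
      ∀ v : V, inducedCol c k ord v = col v := by
  classical
  set n := Fintype.card V with hn
  obtain e := Fintype.equivFin V
  set tv : V → ℚ := fun v => (((e v : ℕ) : ℚ) + 1) / (2 * ((n : ℚ) + 2)) with htv
  set sp : Fin k → ℚ := fun p => (((p : ℕ) : ℚ) + 1) / (2 * ((k : ℚ) + 2)) with hsp
  have htv0 : ∀ v, 0 < tv v := fun v => by positivity
  have htv1 : ∀ v, tv v < 1/2 := by
    intro v
    rw [htv, div_lt_iff₀ (by positivity)]
    have : ((e v : ℕ) : ℚ) < n := by exact_mod_cast (e v).isLt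
    linarith
  have hsp0 : ∀ p, 0 < sp p := fun p => by positivity
  have hsp1 : ∀ p, sp p < 1/2 := by
    intro p
    rw [hsp, div_lt_iff₀ (by positivity)]
    have : ((p : ℕ) : ℚ) < k := by exact_mod_cast p.isLt
    linarith
  have htvinj : ∀ u v : V, tv u = tv v → u = v := by
    intro u v h
    rw [htv] at h
    field_simp at h
    exact e.injective (Fin.val_injective (by exact_mod_cast (by linarith : ((e u : ℕ) : ℚ) = (e v : ℕ))))
  have hspinj : ∀ p q : Fin k, sp p = sp q → p = q := by
    intro p q h
    rw [hsp] at h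
    field_simp at h
    exact Fin.val_injective (by exact_mod_cast (by linarith : ((p : ℕ) : ℚ) = (q : ℕ)))
  refine ⟨Sum.elim (fun v => (col v : ℚ) + tv v)
    (fun z => ((z.1 : ℕ) : ℚ) + 1/2 + sp z.2), ⟨?_, ?_, ?_⟩, ?_⟩
  · -- injective
    rintro (u | ⟨i, p⟩) (v | ⟨j, q⟩) h <;> simp only [Sum.elim_inl, Sum.elim_inr] at h
    · -- inl inl
      have hcc : col u = col v := by
        rcases lt_trichotomy (col u) (col v) with hlt | heq | hgt
        · have : ((col u : ℚ)) + 1 ≤ col v := by exact_mod_cast hlt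
          linarith [htv0 u, htv0 v, htv1 u, htv1 v]
        · exact heq
        · have : ((col v : ℚ)) + 1 ≤ col u := by exact_mod_cast hgt
          linarith [htv0 u, htv0 v, htv1 u, htv1 v]
      have : tv u = tv v := by
        have : ((col u : ℚ)) = col v := by exact_mod_cast hcc
        linarith
      rw [htvinj u v this]
    · -- inl inr : impossible
      exfalso
      rcases lt_or_ge ((col u : ℚ)) (((j : ℕ) : ℚ) + 1) with hlt | hge
      · have h1 : (col u : ℕ) ≤ (j : ℕ) := Nat.lt_succ_iff.mp (by exact_mod_cast (by linarith : ((col u:ℚ)) < (j:ℕ) + 1))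
        have : ((col u : ℚ)) ≤ ((j : ℕ) : ℚ) := by exact_mod_cast h1
        linarith [htv1 u, hsp0 q]
      · -- col u ≥ j + 1, so ord inl > col u ≥ j+1 > ord inr
        linarith [htv0 u, hsp1 q]
    · -- inr inl : impossible, symmetric
      exfalso
      rcases lt_or_ge ((col v : ℚ)) (((i : ℕ) : ℚ) + 1) with hlt | hge
      · have h1 : (col v : ℕ) ≤ (i : ℕ) := Nat.lt_succ_iff.mp (by exact_mod_cast (by linarith : ((col v:ℚ)) < (i:ℕ) + 1))
        have : ((col v : ℚ)) ≤ ((i : ℕ) : ℚ) := by exact_mod_cast h1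
        linarith [htv1 v, hsp0 p]
      · linarith [htv0 v, hsp1 p]
    · -- inr inr
      have hij : (i : ℕ) = (j : ℕ) := by
        rcases lt_trichotomy ((i:ℕ)) ((j:ℕ)) with hlt | heq | hgt
        · have : ((i : ℕ) : ℚ) + 1 ≤ (j : ℕ) := by exact_mod_cast hlt
          linarith [hsp0 p, hsp0 q, hsp1 p, hsp1 q]
        · exact heq
        · have : ((j : ℕ) : ℚ) + 1 ≤ (i : ℕ) := by exact_mod_cast hgt
          linarith [hsp0 p, hsp0 q, hsp1 p, hsp1 q]
      have hpq : p = q := by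
        apply hspinj
        have : ((i : ℕ) : ℚ) = (j : ℕ) := by exact_mod_cast hij
        linarith
      have : i = j := Fin.val_injective hij
      rw [this, hpq]
  · -- interval property
    rintro i (v | ⟨j, p'⟩) ⟨p, q, h1, h2⟩ <;>
      simp only [Sum.elim_inl, Sum.elim_inr] at h1 h2
    · exfalso
      have hlt : ((i : ℕ) : ℚ) < col v := by linarith [hsp0 p, htv1 v]
      have hle : ((col v : ℚ)) < ((i : ℕ) : ℚ) + 1 := by linarith [hsp1 q, htv0 v]
      have h3 : (i : ℕ) < col v := by exact_mod_cast hlt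
      have h4 : col v < (i : ℕ) + 1 := by exact_mod_cast hle
      omega
    · refine ⟨p', ?_⟩
      have hlt : ((i : ℕ) : ℚ) < ((j : ℕ) : ℚ) + 1 := by linarith [hsp0 p, hsp1 p']
      have hle : ((j : ℕ) : ℚ) < ((i : ℕ) : ℚ) + 1 := by linarith [hsp1 q, hsp0 p']
      have h3 : (i : ℕ) < (j : ℕ) + 1 := by exact_mod_cast hlt
      have h4 : (j : ℕ) < (i : ℕ) + 1 := by exact_mod_cast hle
      have : i = j := Fin.val_injective (by omega)
      rw [this]
  · -- copies in order
    intro i j hij p q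
    simp only [Sum.elim_inr]
    have : ((i : ℕ) : ℚ) + 1 ≤ ((j : ℕ) : ℚ) := by exact_mod_cast hij
    linarith [hsp1 p, hsp0 q]
  · -- induced coloring
    intro v
    unfold inducedCol
    apply card_eq_of_mem_iff_lt (by have := hcol v; omega : col v ≤ c - 1)
    intro i
    rw [Finset.mem_filter]
    simp only [Sum.elim_inl, Sum.elim_inr, Finset.mem_univ, true_and]
    constructor
    · intro h
      have := h ⟨0, by omega⟩
      have h1 : ((i : ℕ) : ℚ) < col v := by
        have := hsp0 (⟨0, by omega⟩ : Fin k)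
        have := htv1 v
        linarith
      exact_mod_cast h1
    · intro h p
      have : ((i : ℕ) : ℚ) + 1 ≤ col v := by exact_mod_cast h
      linarith [hsp1 p, htv0 v]

-- forward direction
lemma p4fwd {V : Type} [Fintype V] [DecidableEq V] (G : SimpleGraph V)
    (c k : ℕ) (hc : 1 ≤ c) (hk : 2 ≤ k)
    (fn : ℕ) (F : SimpleGraph (Fin fn)) (fcol : Fin fn → ℕ) (hfcol : ∀ u, fcol u < c)
    (ord : V ⊕ Fin (c - 1) × Fin k → ℚ) (hord : GoodOrd c k ord)
    (φ : Fin fn ↪ V) (hφadj : ∀ a b, F.Adj a b → G.Adj (φ a) (φ b))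
    (hφcol : ∀ a, inducedCol c k ord (φ a) = fcol a) :
    ∃ θ : (Fin fn ⊕ Fin (c - 1) × Fin k) ↪ (V ⊕ Fin (c - 1) × Fin k),
      (∀ a b, (starGraph F c k).Adj a b → (starGraph G c k).Adj (θ a) (θ b)) ∧
      ∀ a b, patternLT c k fcol a b → ord (θ a) < ord (θ b) := by
  have hk0 : 0 < k := by omega
  refine ⟨⟨Sum.map φ id, φ.injective.sumMap Function.injective_id⟩, ?_, ?_⟩
  · rintro (u | ⟨i, p⟩) (v | ⟨j, q⟩) hab <;>
      rw [starGraph, SimpleGraph.fromRel_adj] at hab ⊢ <;>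
      simp only [Function.Embedding.coeFn_mk, Sum.map_inl, Sum.map_inr, id] <;>
      obtain ⟨hne, hr⟩ := hab
    · refine ⟨by simp [φ.injective.ne_iff]; rintro rfl; exact hne rfl, ?_⟩
      rcases hr with h | h
      · exact Or.inl (hφadj _ _ h)
      · exact Or.inr (hφadj _ _ h)
    · simp at hr
    · simp at hr
    · exact ⟨by simp only [ne_eq, Sum.inr.injEq] at hne ⊢; exact hne, hr⟩
  · rintro (u | ⟨i, p⟩) (v | ⟨j, q⟩) hab <;>
      simp only [patternLT] at hab <;>
      simp only [Function.Embedding.coeFn_mk, Sum.map_inl, Sum.map_inr, id]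
    · exact good_vertex_lt hord hk0 _ _ (by rw [hφcol, hφcol]; exact hab)
    · exact good_above hord hk0 _ j (by rw [hφcol]; exact hab) q
    · exact (good_below_iff hord hk0 _ i).mpr (by rw [hφcol]; exact hab) p
    · exact hord.2.2 i j hab p q

lemma p4bwd {V : Type} [Fintype V] [DecidableEq V] (G : SimpleGraph V)
    (c k : ℕ) (hc : 1 ≤ c) (hk : 2 ≤ k)
    (hG : ¬ ∃ s : Finset V, G.IsNClique k s)
    (fn : ℕ) (F : SimpleGraph (Fin fn)) (fcol : Fin fn → ℕ) (hfcol : ∀ u, fcol u < c)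
    (ord : V ⊕ Fin (c - 1) × Fin k → ℚ) (hord : GoodOrd c k ord)
    (θ : (Fin fn ⊕ Fin (c - 1) × Fin k) ↪ (V ⊕ Fin (c - 1) × Fin k))
    (hadj : ∀ a b, (starGraph F c k).Adj a b → (starGraph G c k).Adj (θ a) (θ b))
    (hpat : ∀ a b, patternLT c k fcol a b → ord (θ a) < ord (θ b)) :
    ∃ φ : Fin fn ↪ V, (∀ a b, F.Adj a b → G.Adj (φ a) (φ b)) ∧
      ∀ a, inducedCol c k ord (φ a) = fcol a := by
  classical
  have hk0 : 0 < k := by omega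
  -- copies are cliques, so map to copies
  have hclique : ∀ (i : Fin (c-1)) (p q : Fin k), p ≠ q →
      (starGraph G c k).Adj (θ (Sum.inr (i, p))) (θ (Sum.inr (i, q))) := by
    intro i p q hpq
    apply hadj
    rw [starGraph, SimpleGraph.fromRel_adj]
    exact ⟨by simp [hpq], Or.inl ⟨rfl, hpq⟩⟩
  have H : ∀ i : Fin (c - 1), ∃ j : Fin (c - 1), ∃ τ : Fin k → Fin k,
      ∀ p, θ (Sum.inr (i, p)) = Sum.inr (j, τ p) := by
    intro i
    by_cases hall : ∀ p : Fin k, ∃ u : V, θ (Sum.inr (i, p)) = Sum.inl u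
    · -- would give a k-clique in G
      exfalso
      choose ψ hψ using hall
      have hψinj : Function.Injective ψ := by
        intro p q h
        have : θ (Sum.inr (i, p)) = θ (Sum.inr (i, q)) := by rw [hψ, hψ, h]
        have := θ.injective this
        simpa using this
      apply hG
      refine ⟨Finset.univ.image ψ, ?_, ?_⟩
      · intro u hu v hv huv
        simp only [Finset.coe_image, Set.mem_image] at hu hv
        obtain ⟨p, -, rfl⟩ := hu
        obtain ⟨q, -, rfl⟩ := hv
        have hpq : p ≠ q := fun h => huv (by rw [h])
        have := hclique i p q hpq
        rw [hψ, hψ, starGraph, SimpleGraph.fromRel_adj] at this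
        obtain ⟨-, h | h⟩ := this
        · exact h
        · exact h.symm
      · rw [Finset.card_image_of_injective _ hψinj, Finset.card_univ, Fintype.card_fin]
    · push_neg at hall
      obtain ⟨p₀, hp₀⟩ := hall
      obtain ⟨j, q₀, hjq⟩ : ∃ j q₀, θ (Sum.inr (i, p₀)) = Sum.inr (j, q₀) := by
        rcases h : θ (Sum.inr (i, p₀)) with u | ⟨j, q⟩
        · exact absurd h (hp₀ u)
        · exact ⟨j, q, rfl⟩
      have hex : ∀ p : Fin k, ∃ z : Fin (c-1) × Fin k, θ (Sum.inr (i, p)) = Sum.inr z := by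
        intro p
        by_cases h : p = p₀
        · subst h; exact ⟨_, hjq⟩
        · have hadj' := hclique i p p₀ h
          rw [hjq, starGraph, SimpleGraph.fromRel_adj] at hadj'
          rcases hh : θ (Sum.inr (i, p)) with u | z
          · rw [hh] at hadj'; simp at hadj'
          · exact ⟨z, rfl⟩
      refine ⟨j, fun p => ((hex p).choose).2, ?_⟩
      intro p
      have hspec := (hex p).choose_spec
      have hfst : ((hex p).choose).1 = j := by
        by_cases h : p = p₀
        · subst h
          have h2 : (Sum.inr ((hex p).choose) : V ⊕ Fin (c-1) × Fin k) = Sum.inr (j, q₀) :=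
            hspec.symm.trans hjq
          exact congrArg Prod.fst (Sum.inr.inj h2)
        · have hadj' := hclique i p p₀ h
          rw [hjq, hspec, starGraph, SimpleGraph.fromRel_adj] at hadj'
          obtain ⟨-, hr | hr⟩ := hadj'
          · exact hr.1
          · exact hr.1.symm
      rw [hspec, show (hex p).choose = (j, ((hex p).choose).2) from Prod.ext hfst rfl]
  choose σ τ hστ using H
  have hτinj : ∀ i, Function.Injective (τ i) := by
    intro i p q h
    have : θ (Sum.inr (i, p)) = θ (Sum.inr (i, q)) := by rw [hστ, hστ, h]
    simpa using θ.injective this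
  have hτsurj : ∀ i, Function.Surjective (τ i) :=
    fun i => Finite.surjective_of_injective (hτinj i)
  have hσmono : StrictMono σ := by
    intro i i' hii
    have h1 : ord (θ (Sum.inr (i, ⟨0, hk0⟩))) < ord (θ (Sum.inr (i', ⟨0, hk0⟩))) :=
      hpat _ _ hii
    rw [hστ, hστ] at h1
    rcases lt_trichotomy (σ i) (σ i') with h | h | h
    · exact h
    · exfalso
      obtain ⟨q, hq⟩ := hτsurj i' (τ i ⟨0, hk0⟩)
      have h2 : ord (θ (Sum.inr (i, ⟨0, hk0⟩))) < ord (θ (Sum.inr (i', q))) :=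
        hpat _ _ hii
      rw [hστ, hστ, hq, h] at h2
      exact lt_irrefl _ h2
    · exact absurd (hord.2.2 _ _ h _ _) (lt_asymm h1)
  have hσid : ∀ i, σ i = i := strictMono_fin_id σ hσmono
  -- vertices of F map to vertices of G
  have HV : ∀ a : Fin fn, ∃ u : V, θ (Sum.inl a) = Sum.inl u := by
    intro a
    rcases h : θ (Sum.inl a) with u | ⟨j, p⟩
    · exact ⟨u, rfl⟩
    · exfalso
      have hfa : fcol a ≤ c - 1 := by have := hfcol a; omega
      rcases lt_or_ge ((j : ℕ)) (fcol a) with hj | hj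
      · obtain ⟨q, hq⟩ := hτsurj j p
        have := hpat (Sum.inr (j, q)) (Sum.inl a) hj
        rw [h, hστ, hσid, hq] at this
        exact lt_irrefl _ this
      · obtain ⟨q, hq⟩ := hτsurj j p
        have := hpat (Sum.inl a) (Sum.inr (j, q)) hj
        rw [h, hστ, hσid, hq] at this
        exact lt_irrefl _ this
  choose φ₀ hφ₀ using HV
  have hφ₀inj : Function.Injective φ₀ := by
    intro a b h
    have : θ (Sum.inl a) = θ (Sum.inl b) := by rw [hφ₀, hφ₀, h]
    simpa using θ.injective this
  refine ⟨⟨φ₀, hφ₀inj⟩, ?_, ?_⟩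
  · intro a b hab
    have := hadj (Sum.inl a) (Sum.inl b) (by
      rw [starGraph, SimpleGraph.fromRel_adj]
      exact ⟨by simp [hab.ne], Or.inl hab⟩)
    rw [hφ₀, hφ₀, starGraph, SimpleGraph.fromRel_adj] at this
    obtain ⟨-, h | h⟩ := this
    · exact h
    · exact h.symm
  · intro a
    simp only [Function.Embedding.coeFn_mk]
    unfold inducedCol
    apply card_eq_of_mem_iff_lt (by have := hfcol a; omega : fcol a ≤ c - 1)
    intro i
    rw [Finset.mem_filter]
    simp only [Finset.mem_univ, true_and]
    constructor
    · intro h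
      by_contra hi
      push_neg at hi
      have := hpat (Sum.inl a) (Sum.inr (i, ⟨0, hk0⟩)) hi
      rw [hφ₀, hστ, hσid] at this
      exact absurd (h (τ i ⟨0, hk0⟩)) (lt_asymm this)
    · intro hi p
      obtain ⟨q, hq⟩ := hτsurj i p
      have := hpat (Sum.inr (i, q)) (Sum.inl a) hi
      rw [hφ₀, hστ, hσid, hq] at this
      exact this

end helpers

/-- Claim 4.4 ("equiorder") of Kun–Nešetřil: for a graph `G` with no copy of `K_k`,
colorings of `G` by `c` colors correspond (up to equivalence of orderings) to good
orderings of `G*`, and under this correspondence colored copies of `F'` in `G`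
correspond to ordered copies of `F₊` in `G*`. -/
theorem stmt18 {V : Type} [Fintype V] [DecidableEq V] (G : SimpleGraph V)
    (c k : ℕ) (hc : 1 ≤ c) (hk : 2 ≤ k)
    (hG : ¬ ∃ s : Finset V, G.IsNClique k s) :
    -- every coloring is induced by some good ordering
    (∀ col : V → ℕ, (∀ v, col v < c) →
      ∃ ord : V ⊕ Fin (c - 1) × Fin k → ℚ, GoodOrd c k ord ∧
        ∀ v : V, inducedCol c k ord v = col v) ∧
    -- every good ordering induces a coloring with c colors
    (∀ ord : V ⊕ Fin (c - 1) × Fin k → ℚ, GoodOrd c k ord →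
      ∀ v : V, inducedCol c k ord v < c) ∧
    -- equivalent good orderings induce the same coloring
    (∀ ord ord' : V ⊕ Fin (c - 1) × Fin k → ℚ, GoodOrd c k ord → GoodOrd c k ord' →
      (∀ x y, ord x < ord y ↔ ord' x < ord' y) →
      ∀ v : V, inducedCol c k ord v = inducedCol c k ord' v) ∧
    -- colored copies of F' in (G, coloring) correspond to ordered copies of F₊ in (G*, ord)
    (∀ (fn : ℕ) (F : SimpleGraph (Fin fn)) (fcol : Fin fn → ℕ), (∀ u, fcol u < c) →
      ∀ ord : V ⊕ Fin (c - 1) × Fin k → ℚ, GoodOrd c k ord →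
      ((∃ φ : Fin fn ↪ V, (∀ a b, F.Adj a b → G.Adj (φ a) (φ b)) ∧
          ∀ a, inducedCol c k ord (φ a) = fcol a) ↔
        (∃ θ : (Fin fn ⊕ Fin (c - 1) × Fin k) ↪ (V ⊕ Fin (c - 1) × Fin k),
          (∀ a b, (starGraph F c k).Adj a b → (starGraph G c k).Adj (θ a) (θ b)) ∧
          ∀ a b, patternLT c k fcol a b → ord (θ a) < ord (θ b)))) := by
  refine ⟨fun col hcol => part1 c k hc hk col hcol, ?_, ?_, ?_⟩
  · intro ord hord v
    have := inducedCol_le (ord := ord) v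
    omega
  · intro ord ord' hord hord' heq v
    unfold inducedCol
    congr 1
    apply Finset.filter_congr
    intro i _
    exact forall_congr' fun p => heq _ _
  · intro fn F fcol hfcol ord hord
    constructor
    · rintro ⟨φ, hφadj, hφcol⟩
      exact p4fwd G c k hc hk fn F fcol hfcol ord hord φ hφadj hφcol
    · rintro ⟨θ, hadj, hpat⟩
      exact p4bwd G c k hc hk hG fn F fcol hfcol ord hord θ hadj hpat
end
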